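/- Let (E,e) be a matrix factorization of w over S with a connection ∇ and θ = [∇,e]. For every even q ≥ 0, dw ∧ str((∧ ⊗ 1_E) ∘ θ^q) = 0 in ⋀^{q+1}Ω. Consequently the Chern character of a matrix factorization admitting a global connection, ch(E) = str(Σ_{q} [∇,e]^q/q!), is a cocycle in the 2-periodic complex (⊕_q ⋀^qΩ, dw ∧ −). -/

import Mathlib

set_option maxHeartbeats 1000000

open scoped TensorProduct
open PiTensorProduct

/-- Odd differential of a matrix factorization on the total module. -/
noncomputable def mfDiff {S E₀ E₁ : Type*} [CommRing S]
    [AddCommGroup E₀] [AddCommGroup E₁] [Module S E₀] [Module S E₁]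
    (e₀ : E₀ →ₗ[S] E₁) (e₁ : E₁ →ₗ[S] E₀) : (E₀ × E₁) →ₗ[S] (E₀ × E₁) :=
  LinearMap.prod (e₁ ∘ₗ LinearMap.snd S E₀ E₁) (e₀ ∘ₗ LinearMap.fst S E₀ E₁)

/-- A pair of connections on the graded components assembled on the total module. -/
noncomputable def connPair {k S E₀ E₁ : Type*} [Field k] [CommRing S] [Algebra k S]
    [AddCommGroup E₀] [AddCommGroup E₁] [Module S E₀] [Module S E₁]
    [Module k E₀] [Module k E₁] [IsScalarTower k S E₀] [IsScalarTower k S E₁]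
    (na₀ : E₀ →ₗ[k] (Ω[S⁄k] ⊗[S] E₀)) (na₁ : E₁ →ₗ[k] (Ω[S⁄k] ⊗[S] E₁)) :
    (E₀ × E₁) → (Ω[S⁄k] ⊗[S] (E₀ × E₁)) :=
  fun x => (LinearMap.lTensor (Ω[S⁄k]) (LinearMap.inl S E₀ E₁)) (na₀ x.1)
    + (LinearMap.lTensor (Ω[S⁄k]) (LinearMap.inr S E₀ E₁)) (na₁ x.2)

/-- The `N`-valued trace of a map `G : V → N ⊗ V` on a finite free module `V`,
computed with respect to a basis `b` (equivalently, the canonical contraction). -/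
noncomputable def coefTrace {S V N : Type*} [CommRing S] [AddCommGroup V] [Module S V]
    [AddCommGroup N] [Module S N] {n : ℕ} (b : Module.Basis (Fin n) S V)
    (G : V →ₗ[S] N ⊗[S] V) : N :=
  ∑ j : Fin n, (TensorProduct.rid S N) ((LinearMap.lTensor N (b.coord j)) (G (b j)))

set_option synthInstance.maxHeartbeats 1000000



section AuxA
variable {R : Type*} [CommRing R] {M : Type*} [AddCommGroup M] [Module R M]

lemma aux_iMulti_snoc (q : ℕ) (ω : Fin q → M) (μ : M) :
    ExteriorAlgebra.ιMulti R (q+1) (Fin.snoc ω μ)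
      = ExteriorAlgebra.ιMulti R q ω * ExteriorAlgebra.ι R μ := by
  rw [ExteriorAlgebra.ιMulti_apply, ExteriorAlgebra.ιMulti_apply, List.ofFn_succ']
  simp [Fin.snoc_castSucc, Fin.snoc_last]

noncomputable def tcoefL {N E : Type*} [AddCommGroup N] [Module R N]
    [AddCommGroup E] [Module R E] {ι : Type*} (b : Module.Basis ι R E) (i : ι) :
    (N ⊗[R] E) →ₗ[R] N :=
  (TensorProduct.rid R N).toLinearMap ∘ₗ LinearMap.lTensor N (b.coord i)

lemma tcoefL_apply {N E : Type*} [AddCommGroup N] [Module R N]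
    [AddCommGroup E] [Module R E] {ι : Type*} (b : Module.Basis ι R E) (i : ι)
    (t : N ⊗[R] E) :
    tcoefL b i t = (TensorProduct.rid R N) ((LinearMap.lTensor N (b.coord i)) t) := rfl

lemma tcoefL_tmul {N E : Type*} [AddCommGroup N] [Module R N]
    [AddCommGroup E] [Module R E] {ι : Type*} (b : Module.Basis ι R E) (i : ι)
    (n : N) (x : E) : tcoefL b i (n ⊗ₜ[R] x) = b.repr x i • n := by
  simp [tcoefL]

lemma tcoefL_expand {N E : Type*} [AddCommGroup N] [Module R N]
    [AddCommGroup E] [Module R E] {ι : Type*} [Fintype ι]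
    (b : Module.Basis ι R E) (t : N ⊗[R] E) :
    t = ∑ i, tcoefL b i t ⊗ₜ[R] b i := by
  induction t using TensorProduct.induction_on with
  | zero => simp
  | tmul n x =>
    simp only [tcoefL_tmul, TensorProduct.smul_tmul]
    rw [← TensorProduct.tmul_sum]
    congr 1
    exact (b.sum_repr x).symm
  | add s t hs ht =>
    simp only [map_add, TensorProduct.add_tmul, Finset.sum_add_distrib, ← hs, ← ht]

lemma tcoefL_map {N N' E : Type*} [AddCommGroup N] [Module R N]
    [AddCommGroup N'] [Module R N'] [AddCommGroup E] [Module R E]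
    {ι : Type*} (b : Module.Basis ι R E) (i : ι) (φ : N →ₗ[R] N') (t : N ⊗[R] E) :
    tcoefL b i (TensorProduct.map φ LinearMap.id t) = φ (tcoefL b i t) := by
  induction t using TensorProduct.induction_on with
  | zero => simp
  | tmul n x => simp [tcoefL_tmul]
  | add s t hs ht => simp [map_add, hs, ht]

end AuxA

section AuxB
variable {R : Type*} [CommRing R] {M : Type*} [AddCommGroup M] [Module R M]

/-- commutes with all degree-one generators -/
def ExtC (x : ExteriorAlgebra R M) : Prop :=
  ∀ v : M, ExteriorAlgebra.ι R v * x = x * ExteriorAlgebra.ι R v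

/-- anticommutes with all degree-one generators -/
def ExtA (x : ExteriorAlgebra R M) : Prop :=
  ∀ v : M, ExteriorAlgebra.ι R v * x = -(x * ExteriorAlgebra.ι R v)

lemma extA_iota (u : M) : ExtA (ExteriorAlgebra.ι R u) := fun v =>
  eq_neg_of_add_eq_zero_left (ExteriorAlgebra.ι_add_mul_swap v u)

lemma extC_one : ExtC (1 : ExteriorAlgebra R M) := fun v => by simp

lemma extC_algebraMap (r : R) : ExtC (algebraMap R (ExteriorAlgebra R M) r) := fun v =>
  (Algebra.commutes r _).symm

lemma extC_zero : ExtC (0 : ExteriorAlgebra R M) := fun _ => by simp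

lemma extA_zero : ExtA (0 : ExteriorAlgebra R M) := fun _ => by simp

lemma extC_add {x y : ExteriorAlgebra R M} (hx : ExtC x) (hy : ExtC y) : ExtC (x + y) :=
  fun v => by rw [mul_add, add_mul, hx v, hy v]

lemma extA_add {x y : ExteriorAlgebra R M} (hx : ExtA x) (hy : ExtA y) : ExtA (x + y) :=
  fun v => by rw [mul_add, add_mul, hx v, hy v, neg_add]

lemma extC_mul {x y : ExteriorAlgebra R M} (hx : ExtC x) (hy : ExtC y) : ExtC (x * y) :=
  fun v => by rw [← mul_assoc, hx v, mul_assoc, hy v, mul_assoc]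

lemma extCA_mul {x y : ExteriorAlgebra R M} (hx : ExtC x) (hy : ExtA y) : ExtA (x * y) :=
  fun v => by rw [← mul_assoc, hx v, mul_assoc, hy v, mul_neg, mul_assoc]

lemma extAC_mul {x y : ExteriorAlgebra R M} (hx : ExtA x) (hy : ExtC y) : ExtA (x * y) :=
  fun v => by rw [← mul_assoc, hx v, neg_mul, mul_assoc, hy v, mul_assoc]

lemma extAA_mul {x y : ExteriorAlgebra R M} (hx : ExtA x) (hy : ExtA y) : ExtC (x * y) :=
  fun v => by rw [← mul_assoc, hx v, neg_mul, mul_assoc, hy v, mul_neg, neg_neg, mul_assoc]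

lemma extC_sum {α : Type*} {s : Finset α} {f : α → ExteriorAlgebra R M}
    (h : ∀ a ∈ s, ExtC (f a)) : ExtC (∑ a ∈ s, f a) := fun v => by
  rw [Finset.mul_sum, Finset.sum_mul]
  exact Finset.sum_congr rfl fun a ha => h a ha v

lemma extA_sum {α : Type*} {s : Finset α} {f : α → ExteriorAlgebra R M}
    (h : ∀ a ∈ s, ExtA (f a)) : ExtA (∑ a ∈ s, f a) := fun v => by
  rw [Finset.mul_sum, Finset.sum_mul, ← Finset.sum_neg_distrib]
  exact Finset.sum_congr rfl fun a ha => h a ha v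

end AuxB

section AuxM
variable {Λ : Type*} [Ring Λ] {ι₀ ι₁ : Type*} [Fintype ι₀] [Fintype ι₁]

/-- signed-trace swap for an off-diagonal `N` whose entries commute with those of `R` -/
lemma aux_str_swap (N R : Matrix (ι₀ ⊕ ι₁) (ι₀ ⊕ ι₁) Λ)
    (hN : ∀ i j, (Sum.elim (fun _ => false) (fun _ => true) i
        = Sum.elim (fun _ => false) (fun _ => true) j) → N i j = 0)
    (hcomm : ∀ i j, N i j * R j i = R j i * N i j) :
    ∑ i, (Sum.elim (fun _ => (1:Λ)) (fun _ => -1) i) * (N * R) i i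
      = - ∑ i, (Sum.elim (fun _ => (1:Λ)) (fun _ => -1) i) * (R * N) i i := by
  simp only [Matrix.mul_apply, Finset.mul_sum, ← Finset.sum_neg_distrib]
  rw [Finset.sum_comm (γ := ι₀ ⊕ ι₁)]
  refine Finset.sum_congr rfl fun i _ => Finset.sum_congr rfl fun m _ => ?_
  by_cases hb : (Sum.elim (fun _ => false) (fun _ => true) i
      = Sum.elim (fun _ => false) (fun _ => true) m)
  · rw [hN m i hb.symm]
    simp
  · rw [hcomm]
    cases i <;> cases m <;> simp_all <;> ring

end AuxM
/-- Let `(E, e)` be a matrix factorization of `w` over `S` with a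
connection `∇`, `θ = [∇, e]`.  For every even `q`, `dw ∧ str((∧ ⊗ 1) ∘ θ^q) = 0` in
`⋀^{q+1} Ω` (inside the exterior algebra of `Ω`), where `str = tr (θ^q on E₀) − tr (θ^q on E₁)`
is the supertrace, computed with chosen bases of `E₀` and `E₁`.  Consequently the Chern
character `ch(E) = str(Σ_q [∇,e]^q / q!)` of a matrix factorization with a global
connection is a cocycle in the 2-periodic complex `(⊕_q ⋀^q Ω, dw ∧ −)`. -/
theorem stmt_14 {k : Type*} [Field k] [CharZero k]
    {S : Type*} [CommRing S] [Algebra k S] (w : S)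
    {E₀ E₁ : Type*} [AddCommGroup E₀] [AddCommGroup E₁]
    [Module S E₀] [Module S E₁] [Module k E₀] [Module k E₁]
    [IsScalarTower k S E₀] [IsScalarTower k S E₁]
    {n₀ n₁ : ℕ} (b₀ : Module.Basis (Fin n₀) S E₀) (b₁ : Module.Basis (Fin n₁) S E₁)
    (e₀ : E₀ →ₗ[S] E₁) (e₁ : E₁ →ₗ[S] E₀)
    (he₀ : e₁ ∘ₗ e₀ = w • (LinearMap.id : E₀ →ₗ[S] E₀))
    (he₁ : e₀ ∘ₗ e₁ = w • (LinearMap.id : E₁ →ₗ[S] E₁))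
    (na₀ : E₀ →ₗ[k] (Ω[S⁄k] ⊗[S] E₀)) (na₁ : E₁ →ₗ[k] (Ω[S⁄k] ⊗[S] E₁))
    (hna₀ : ∀ (a : S) (x : E₀),
      na₀ (a • x) = (KaehlerDifferential.D k S a) ⊗ₜ[S] x + a • na₀ x)
    (hna₁ : ∀ (a : S) (x : E₁),
      na₁ (a • x) = (KaehlerDifferential.D k S a) ⊗ₜ[S] x + a • na₁ x)
    (θ : (E₀ × E₁) →ₗ[S] (Ω[S⁄k] ⊗[S] (E₀ × E₁)))
    (hθ : ∀ x : E₀ × E₁,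
      θ x = connPair na₀ na₁ (mfDiff e₀ e₁ x)
        - (LinearMap.lTensor (Ω[S⁄k]) (mfDiff e₀ e₁)) (connPair na₀ na₁ x))
    (app : ∀ q : ℕ,
      ((⨂[S] (_ : Fin q), Ω[S⁄k]) ⊗[S] (Ω[S⁄k] ⊗[S] (E₀ × E₁))) →ₗ[S]
        ((⨂[S] (_ : Fin (q + 1)), Ω[S⁄k]) ⊗[S] (E₀ × E₁)))
    (happ : ∀ (q : ℕ) (ω : Fin q → Ω[S⁄k]) (μ : Ω[S⁄k]) (x : E₀ × E₁),
      app q ((PiTensorProduct.tprod S ω) ⊗ₜ[S] (μ ⊗ₜ[S] x)) = (PiTensorProduct.tprod S (Fin.snoc ω μ)) ⊗ₜ[S] x)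
    (Θ : ∀ q : ℕ, (E₀ × E₁) →ₗ[S] ((⨂[S] (_ : Fin q), Ω[S⁄k]) ⊗[S] (E₀ × E₁)))
    (hΘ₀ : ∀ x : E₀ × E₁, Θ 0 x = (PiTensorProduct.tprod S (fun i : Fin 0 => i.elim0)) ⊗ₜ[S] x)
    (hΘs : ∀ q : ℕ,
      Θ (q + 1) = app q ∘ₗ (LinearMap.lTensor (⨂[S] (_ : Fin q), Ω[S⁄k]) θ) ∘ₗ Θ q)
    (wedge : ∀ q : ℕ,
      (⨂[S] (_ : Fin q), Ω[S⁄k]) →ₗ[S] ExteriorAlgebra S (Ω[S⁄k]))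
    (hwedge : ∀ (q : ℕ) (ω : Fin q → Ω[S⁄k]),
      wedge q (PiTensorProduct.tprod S ω) = ExteriorAlgebra.ιMulti S q ω) :
    ∀ q : ℕ, Even q →
      ExteriorAlgebra.ι S (KaehlerDifferential.D k S w) *
        (coefTrace b₀
            ((LinearMap.lTensor (ExteriorAlgebra S (Ω[S⁄k])) (LinearMap.fst S E₀ E₁)) ∘ₗ
              (TensorProduct.map (wedge q) LinearMap.id) ∘ₗ Θ q ∘ₗ (LinearMap.inl S E₀ E₁))
          - coefTrace b₁
            ((LinearMap.lTensor (ExteriorAlgebra S (Ω[S⁄k])) (LinearMap.snd S E₀ E₁)) ∘ₗ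
              (TensorProduct.map (wedge q) LinearMap.id) ∘ₗ Θ q ∘ₗ (LinearMap.inr S E₀ E₁)))
        = 0 := by
  classical
  intro q hq
  set b : Module.Basis (Fin n₀ ⊕ Fin n₁) S (E₀ × E₁) := b₀.prod b₁ with hbdef
  -- square of the odd differential
  have hee2 : (mfDiff e₀ e₁) ∘ₗ (mfDiff e₀ e₁)
      = w • (LinearMap.id : (E₀ × E₁) →ₗ[S] (E₀ × E₁)) := by
    apply LinearMap.ext
    rintro ⟨x₀, x₁⟩
    have h0 := LinearMap.congr_fun he₀ x₀
    have h1 := LinearMap.congr_fun he₁ x₁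
    simp only [LinearMap.comp_apply, LinearMap.smul_apply, LinearMap.id_apply] at h0 h1 ⊢
    simp only [mfDiff, LinearMap.prod_apply, Function.prod, LinearMap.comp_apply,
      LinearMap.fst_apply, LinearMap.snd_apply, h0, h1, Prod.smul_mk]
  -- Leibniz rule for the assembled connection
  have hconn : ∀ (a : S) (x : E₀ × E₁), connPair na₀ na₁ (a • x)
      = (KaehlerDifferential.D k S a) ⊗ₜ[S] x + a • connPair na₀ na₁ x := by
    intro a x
    have hx : ((x.1, 0) : E₀ × E₁) + ((0, x.2) : E₀ × E₁) = x := by ext <;> simp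
    simp only [connPair, Prod.smul_fst, Prod.smul_snd, hna₀, hna₁, map_add, map_smul,
      LinearMap.lTensor_tmul, LinearMap.inl_apply, LinearMap.inr_apply]
    rw [smul_add, add_add_add_comm, ← TensorProduct.tmul_add, hx]
  -- the fundamental identity  θ∘e + (1⊗e)∘θ = dw ⊗ -
  have hL1 : ∀ x : E₀ × E₁,
      θ (mfDiff e₀ e₁ x) + (LinearMap.lTensor (Ω[S⁄k]) (mfDiff e₀ e₁)) (θ x)
        = (KaehlerDifferential.D k S w) ⊗ₜ[S] x := by
    intro x
    rw [hθ (mfDiff e₀ e₁ x), hθ x, map_sub]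
    have hsq : mfDiff e₀ e₁ (mfDiff e₀ e₁ x) = w • x := by
      simpa using LinearMap.congr_fun hee2 x
    have hll : (LinearMap.lTensor (Ω[S⁄k]) (mfDiff e₀ e₁))
        ((LinearMap.lTensor (Ω[S⁄k]) (mfDiff e₀ e₁)) (connPair na₀ na₁ x))
        = w • connPair na₀ na₁ x := by
      rw [← LinearMap.lTensor_comp_apply, hee2]
      rw [LinearMap.lTensor_smul, LinearMap.lTensor_id]
      rfl
    rw [hsq, hconn w x, hll]
    abel
  -- coefficient matrices
  set Nm : Matrix (Fin n₀ ⊕ Fin n₁) (Fin n₀ ⊕ Fin n₁) (ExteriorAlgebra S (Ω[S⁄k])) :=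
    Matrix.of fun i j => ExteriorAlgebra.ι S (tcoefL b j (θ (b i))) with hNdef
  set Qm : Matrix (Fin n₀ ⊕ Fin n₁) (Fin n₀ ⊕ Fin n₁) (ExteriorAlgebra S (Ω[S⁄k])) :=
    Matrix.of fun i j => algebraMap S _ (b.repr (mfDiff e₀ e₁ (b i)) j) with hQdef
  -- wedge of an `app`
  have hA : ∀ (r : ℕ) (t : ⨂[S] (_ : Fin r), Ω[S⁄k]) (μ : Ω[S⁄k]) (x : E₀ × E₁),
      (TensorProduct.map (wedge (r+1)) LinearMap.id) (app r (t ⊗ₜ[S] (μ ⊗ₜ[S] x)))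
        = (wedge r t * ExteriorAlgebra.ι S μ) ⊗ₜ[S] x := by
    intro r t μ x
    induction t using PiTensorProduct.induction_on with
    | smul_tprod c ω =>
      simp only [← TensorProduct.smul_tmul', map_smul, happ, TensorProduct.map_tmul,
        LinearMap.id_coe, id_eq, hwedge, aux_iMulti_snoc, smul_mul_assoc]
    | add u v hu hv =>
      rw [TensorProduct.add_tmul, map_add, map_add, hu, hv, ← TensorProduct.add_tmul, ← add_mul,
        ← map_add]
  -- the key power formula
  have hkey1 : ∀ (r : ℕ) (i j : Fin n₀ ⊕ Fin n₁),
      tcoefL b i ((TensorProduct.map (wedge r) LinearMap.id) (Θ r (b j))) = (Nm ^ r) j i := by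
    intro r
    induction r with
    | zero =>
      intro i j
      rw [hΘ₀, TensorProduct.map_tmul, hwedge, ExteriorAlgebra.ιMulti_zero_apply,
        LinearMap.id_coe, id_eq, tcoefL_tmul, pow_zero, Matrix.one_apply, Module.Basis.repr_self,
        Finsupp.single_apply]
      split <;> simp
    | succ r ih =>
      intro i j
      have hterm : ∀ m, tcoefL b i ((TensorProduct.map (wedge (r+1)) LinearMap.id)
          (app r ((tcoefL b m (Θ r (b j))) ⊗ₜ[S] θ (b m)))) = (Nm ^ r) j m * Nm m i := by
        intro m
        conv_lhs => rw [tcoefL_expand b (θ (b m)), TensorProduct.tmul_sum]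
        rw [map_sum, map_sum, map_sum]
        simp only [hA, tcoefL_tmul]
        rw [Finset.sum_eq_single i ?h0 ?h1]
        case h0 =>
          intro l _ hl
          rw [Module.Basis.repr_self, Finsupp.single_apply, if_neg hl, zero_smul]
        case h1 => intro h; exact absurd (Finset.mem_univ i) h
        rw [Module.Basis.repr_self, Finsupp.single_apply, if_pos rfl, one_smul,
          ← tcoefL_map b m (wedge r), ih]
        rfl
      rw [hΘs r, LinearMap.comp_apply, LinearMap.comp_apply]
      conv_lhs => rw [tcoefL_expand b (Θ r (b j))]
      rw [map_sum, map_sum, map_sum]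
      simp only [LinearMap.lTensor_tmul]
      rw [map_sum]
      simp only [hterm]
      rw [pow_succ, Matrix.mul_apply]
  -- block structure of θ
  have hcinl : ∀ (a : Fin n₀) (z : Ω[S⁄k] ⊗[S] E₁),
      tcoefL b (Sum.inl a) ((LinearMap.lTensor (Ω[S⁄k]) (LinearMap.inr S E₀ E₁)) z) = 0 := by
    intro a z
    rw [tcoefL_apply, ← LinearMap.lTensor_comp_apply]
    have hz : (b.coord (Sum.inl a)) ∘ₗ (LinearMap.inr S E₀ E₁) = 0 := by
      apply LinearMap.ext; intro y
      simp [hbdef, Module.Basis.coord_apply]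
    rw [hz, LinearMap.lTensor_zero, LinearMap.zero_apply, map_zero]
  have hcinr : ∀ (a : Fin n₁) (z : Ω[S⁄k] ⊗[S] E₀),
      tcoefL b (Sum.inr a) ((LinearMap.lTensor (Ω[S⁄k]) (LinearMap.inl S E₀ E₁)) z) = 0 := by
    intro a z
    rw [tcoefL_apply, ← LinearMap.lTensor_comp_apply]
    have hz : (b.coord (Sum.inr a)) ∘ₗ (LinearMap.inl S E₀ E₁) = 0 := by
      apply LinearMap.ext; intro y
      simp [hbdef, Module.Basis.coord_apply]
    rw [hz, LinearMap.lTensor_zero, LinearMap.zero_apply, map_zero]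
  have hθ0 : ∀ x₀ : E₀, θ ((x₀, (0:E₁)))
      = (LinearMap.lTensor (Ω[S⁄k]) (LinearMap.inr S E₀ E₁))
        (na₁ (e₀ x₀) - (LinearMap.lTensor (Ω[S⁄k]) e₀) (na₀ x₀)) := by
    intro x₀
    rw [hθ, map_sub]
    have h1 : mfDiff e₀ e₁ ((x₀, (0:E₁))) = (((0:E₀), e₀ x₀) : E₀ × E₁) := by
      simp [mfDiff]
    rw [h1]
    congr 1
    · simp [connPair]
    · simp only [connPair, map_zero]
      rw [add_zero, ← LinearMap.lTensor_comp_apply, ← LinearMap.lTensor_comp_apply]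
      have hcmp : (mfDiff e₀ e₁) ∘ₗ (LinearMap.inl S E₀ E₁)
          = (LinearMap.inr S E₀ E₁) ∘ₗ e₀ := by
        apply LinearMap.ext; intro y; simp [mfDiff]
      rw [hcmp]
  have hθ1 : ∀ x₁ : E₁, θ (((0:E₀), x₁))
      = (LinearMap.lTensor (Ω[S⁄k]) (LinearMap.inl S E₀ E₁))
        (na₀ (e₁ x₁) - (LinearMap.lTensor (Ω[S⁄k]) e₁) (na₁ x₁)) := by
    intro x₁
    rw [hθ, map_sub]
    have h1 : mfDiff e₀ e₁ (((0:E₀), x₁)) = ((e₁ x₁, (0:E₁)) : E₀ × E₁) := by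
      simp [mfDiff]
    rw [h1]
    congr 1
    · simp [connPair]
    · simp only [connPair, map_zero]
      rw [zero_add, ← LinearMap.lTensor_comp_apply, ← LinearMap.lTensor_comp_apply]
      have hcmp : (mfDiff e₀ e₁) ∘ₗ (LinearMap.inr S E₀ E₁)
          = (LinearMap.inl S E₀ E₁) ∘ₗ e₁ := by
        apply LinearMap.ext; intro y; simp [mfDiff]
      rw [hcmp]
  have hNpar : ∀ i j, (Sum.elim (fun _ => false) (fun _ => true) i
      = Sum.elim (fun _ => false) (fun _ => true) j) → Nm i j = 0 := by
    rintro (a|a) (c|c) hblk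
    · have hb' : b (Sum.inl a) = ((b₀ a, (0:E₁)) : E₀ × E₁) := by simp [hbdef]
      show ExteriorAlgebra.ι S (tcoefL b (Sum.inl c) (θ (b (Sum.inl a)))) = 0
      rw [hb', hθ0, hcinl, map_zero]
    · exact absurd hblk (by simp)
    · exact absurd hblk (by simp)
    · have hb' : b (Sum.inr a) = (((0:E₀), b₁ a) : E₀ × E₁) := by simp [hbdef]
      show ExteriorAlgebra.ι S (tcoefL b (Sum.inr c) (θ (b (Sum.inr a)))) = 0
      rw [hb', hθ1, hcinr, map_zero]
  -- the matrix identity  Q N + N Q = ι(dw) · 1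
  have hkey2 : Qm * Nm + Nm * Qm
      = Matrix.diagonal (fun _ => ExteriorAlgebra.ι S (KaehlerDifferential.D k S w)) := by
    ext i j
    have h := congrArg (tcoefL b j) (hL1 (b i))
    rw [map_add, tcoefL_tmul] at h
    have h1 : tcoefL b j (θ (mfDiff e₀ e₁ (b i)))
        = ∑ m, b.repr (mfDiff e₀ e₁ (b i)) m • tcoefL b j (θ (b m)) := by
      conv_lhs => rw [← b.sum_repr (mfDiff e₀ e₁ (b i))]
      rw [map_sum, map_sum]
      simp only [map_smul]
    have h2 : tcoefL b j ((LinearMap.lTensor (Ω[S⁄k]) (mfDiff e₀ e₁)) (θ (b i)))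
        = ∑ m, b.repr (mfDiff e₀ e₁ (b m)) j • tcoefL b m (θ (b i)) := by
      conv_lhs => rw [tcoefL_expand b (θ (b i))]
      rw [map_sum, map_sum]
      simp only [LinearMap.lTensor_tmul, tcoefL_tmul]
    rw [h1, h2] at h
    have h3 := congrArg (ExteriorAlgebra.ι S) h
    rw [map_add, map_sum, map_sum, map_smul] at h3
    simp only [map_smul] at h3
    show ∑ m, algebraMap S _ (b.repr (mfDiff e₀ e₁ (b i)) m)
          * ExteriorAlgebra.ι S (tcoefL b j (θ (b m)))
        + ∑ m, ExteriorAlgebra.ι S (tcoefL b m (θ (b i)))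
          * algebraMap S _ (b.repr (mfDiff e₀ e₁ (b m)) j)
        = Matrix.diagonal (fun _ => ExteriorAlgebra.ι S (KaehlerDifferential.D k S w)) i j
    simp only [← Algebra.commutes (A := ExteriorAlgebra S (Ω[S⁄k])), ← Algebra.smul_def]
    rw [h3, Matrix.diagonal_apply, Module.Basis.repr_self, Finsupp.single_apply]
    split <;> simp
  -- parity classes of powers of Nm
  have hNA : ∀ i j, ExtA (Nm i j) := fun i j => extA_iota _
  have hpow : ∀ r : ℕ, (Even r → ∀ i j, ExtC ((Nm ^ r) i j))
      ∧ ((¬ Even r) → ∀ i j, ExtA ((Nm ^ r) i j)) := by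
    intro r
    induction r with
    | zero =>
      refine ⟨fun _ i j => ?_, fun h => absurd Even.zero h⟩
      rw [pow_zero, Matrix.one_apply]
      split
      · exact extC_one
      · exact extC_zero
    | succ r ih =>
      constructor
      · intro he i j
        rw [pow_succ, Matrix.mul_apply]
        refine extC_sum fun m _ => ?_
        have hodd : ¬ Even r := by
          rw [Nat.even_add_one] at he; exact he
        exact extAA_mul (ih.2 hodd i m) (hNA m j)
      · intro ho i j
        rw [pow_succ, Matrix.mul_apply]
        refine extA_sum fun m _ => ?_
        have hev : Even r := by
          rw [Nat.even_add_one, not_not] at ho; exact ho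
        exact extCA_mul (ih.1 hev i m) (hNA m j)
  -- identify the two traces with diagonal blocks of Nm^q
  have hcoord0 : ∀ j : Fin n₀, (b₀.coord j) ∘ₗ (LinearMap.fst S E₀ E₁)
      = b.coord (Sum.inl j) := by
    intro j; apply LinearMap.ext; intro x
    simp [hbdef, Module.Basis.coord_apply]
  have hcoord1 : ∀ j : Fin n₁, (b₁.coord j) ∘ₗ (LinearMap.snd S E₀ E₁)
      = b.coord (Sum.inr j) := by
    intro j; apply LinearMap.ext; intro x
    simp [hbdef, Module.Basis.coord_apply]
  have hbinl : ∀ j : Fin n₀, (LinearMap.inl S E₀ E₁) (b₀ j) = b (Sum.inl j) := by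
    intro j; simp [hbdef]
  have hbinr : ∀ j : Fin n₁, (LinearMap.inr S E₀ E₁) (b₁ j) = b (Sum.inr j) := by
    intro j; simp [hbdef]
  have hG0 : coefTrace b₀
      ((LinearMap.lTensor (ExteriorAlgebra S (Ω[S⁄k])) (LinearMap.fst S E₀ E₁)) ∘ₗ
        (TensorProduct.map (wedge q) LinearMap.id) ∘ₗ Θ q ∘ₗ (LinearMap.inl S E₀ E₁))
      = ∑ j : Fin n₀, (Nm ^ q) (Sum.inl j) (Sum.inl j) := by
    rw [coefTrace]
    refine Finset.sum_congr rfl fun j _ => ?_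
    rw [LinearMap.comp_apply, LinearMap.comp_apply, LinearMap.comp_apply, hbinl j,
      ← LinearMap.lTensor_comp_apply, hcoord0 j, ← tcoefL_apply, hkey1]
  have hG1 : coefTrace b₁
      ((LinearMap.lTensor (ExteriorAlgebra S (Ω[S⁄k])) (LinearMap.snd S E₀ E₁)) ∘ₗ
        (TensorProduct.map (wedge q) LinearMap.id) ∘ₗ Θ q ∘ₗ (LinearMap.inr S E₀ E₁))
      = ∑ j : Fin n₁, (Nm ^ q) (Sum.inr j) (Sum.inr j) := by
    rw [coefTrace]
    refine Finset.sum_congr rfl fun j _ => ?_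
    rw [LinearMap.comp_apply, LinearMap.comp_apply, LinearMap.comp_apply, hbinr j,
      ← LinearMap.lTensor_comp_apply, hcoord1 j, ← tcoefL_apply, hkey1]
  rw [hG0, hG1]
  -- signed trace
  have hsplit : ∀ X : Matrix (Fin n₀ ⊕ Fin n₁) (Fin n₀ ⊕ Fin n₁) (ExteriorAlgebra S (Ω[S⁄k])),
      ∑ i, (Sum.elim (fun _ => (1 : ExteriorAlgebra S (Ω[S⁄k]))) (fun _ => -1) i) * X i i
        = (∑ j : Fin n₀, X (Sum.inl j) (Sum.inl j))
          - ∑ j : Fin n₁, X (Sum.inr j) (Sum.inr j) := by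
    intro X
    rw [Fintype.sum_sum_type]
    simp [sub_eq_add_neg, neg_one_mul, ← Finset.sum_neg_distrib]
  rw [← hsplit, Finset.mul_sum]
  -- the two key matrix products
  have hmm : (Qm * Nm + Nm * Qm) * Nm ^ q = Qm * Nm ^ (q+1) + Nm * (Qm * Nm ^ q) := by
    rw [Matrix.add_mul, Matrix.mul_assoc, Matrix.mul_assoc, ← pow_succ']
  have hd' : Matrix.diagonal (fun _ : Fin n₀ ⊕ Fin n₁ =>
        ExteriorAlgebra.ι S (KaehlerDifferential.D k S w)) * Nm ^ q
      = Qm * Nm ^ (q+1) + Nm * (Qm * Nm ^ q) := by rw [← hkey2, hmm]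
  have hd : ∀ i, ExteriorAlgebra.ι S (KaehlerDifferential.D k S w) * (Nm ^ q) i i
      = (Qm * Nm ^ (q+1)) i i + (Nm * (Qm * Nm ^ q)) i i := by
    intro i
    have h := congrArg (fun M : Matrix (Fin n₀ ⊕ Fin n₁) (Fin n₀ ⊕ Fin n₁)
        (ExteriorAlgebra S (Ω[S⁄k])) => M i i) hd'
    simpa only [Matrix.diagonal_mul, Matrix.add_apply] using h
  have hstep : ∀ i, ExteriorAlgebra.ι S (KaehlerDifferential.D k S w)
      * ((Sum.elim (fun _ => (1:ExteriorAlgebra S (Ω[S⁄k]))) (fun _ => -1) i) * (Nm ^ q) i i)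
      = (Sum.elim (fun _ => (1:ExteriorAlgebra S (Ω[S⁄k]))) (fun _ => -1) i)
        * ((Qm * Nm ^ (q+1)) i i)
        + (Sum.elim (fun _ => (1:ExteriorAlgebra S (Ω[S⁄k]))) (fun _ => -1) i)
        * ((Nm * (Qm * Nm ^ q)) i i) := by
    intro i
    cases i <;>
      simp only [Sum.elim_inl, Sum.elim_inr, one_mul, neg_one_mul, mul_neg, neg_mul, hd,
        neg_add, mul_add]
  simp only [hstep]
  rw [Finset.sum_add_distrib]
  -- swap in the second sum
  have hRC : ∀ i j, ExtC ((Qm * Nm ^ q) i j) := by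
    intro i j
    rw [Matrix.mul_apply]
    exact extC_sum fun m _ => extC_mul (extC_algebraMap _) ((hpow q).1 hq m j)
  have hswap := aux_str_swap Nm (Qm * Nm ^ q) hNpar (fun i j => hRC j i _)
  rw [hswap, Matrix.mul_assoc Qm, ← pow_succ]
  exact add_neg_cancel _
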